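/- Let S be a nonempty finite index set and let (ℓ_i)_{i∈S} be a family of real numbers. Then |2·artanh(∏_{i∈S} tanh(ℓ_i/2))| ≤ min_{i∈S} |ℓ_i|. That is, the magnitude of the sum-product check-node message is upper-bounded by the magnitude of the min-sum check-node message, so the min-sum update over-estimates the reliability of the sum-product update. -/
import Mathlib


/-- The inverse hyperbolic tangent on `(-1, 1)`, defined by the standard formula
`artanh x = (1/2) · ln ((1 + x) / (1 - x))`. -/
noncomputable def artanh (x : ℝ) : ℝ := Real.log ((1 + x) / (1 - x)) / 2

lemma one_add_tanh (t : ℝ) : 1 + Real.tanh t = Real.exp t / Real.cosh t := by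
  rw [Real.tanh_eq_sinh_div_cosh, ← Real.cosh_add_sinh]
  field_simp [(Real.cosh_pos t).ne']

lemma one_sub_tanh (t : ℝ) : 1 - Real.tanh t = Real.exp (-t) / Real.cosh t := by
  rw [Real.tanh_eq_sinh_div_cosh, ← Real.cosh_sub_sinh]
  field_simp [(Real.cosh_pos t).ne']

lemma tanh_lt_one (t : ℝ) : Real.tanh t < 1 := by
  have h : 0 < 1 - Real.tanh t := by
    rw [one_sub_tanh]; positivity
  linarith

lemma neg_one_lt_tanh (t : ℝ) : -1 < Real.tanh t := by
  have h : 0 < 1 + Real.tanh t := by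
    rw [one_add_tanh]; positivity
  linarith

lemma artanh_tanh (t : ℝ) : artanh (Real.tanh t) = t := by
  have hc := (Real.cosh_pos t).ne'
  have h : Real.exp t / Real.cosh t / (Real.exp (-t) / Real.cosh t) = Real.exp t / Real.exp (-t) := by
    field_simp
  rw [artanh, one_add_tanh, one_sub_tanh, h, ← Real.exp_sub, Real.log_exp]
  ring

lemma artanh_neg (x : ℝ) : artanh (-x) = -artanh x := by
  rw [artanh, artanh]
  rw [show (1 + -x) / (1 - -x) = ((1 + x) / (1 - x))⁻¹ by rw [inv_div]; ring_nf]
  rw [Real.log_inv]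
  ring

lemma artanh_nonneg {x : ℝ} (h0 : 0 ≤ x) (h1 : x < 1) : 0 ≤ artanh x := by
  have : (1 : ℝ) ≤ (1 + x) / (1 - x) := by
    rw [le_div_iff₀ (by linarith)]; linarith
  have := Real.log_nonneg this
  rw [artanh]; linarith

lemma abs_artanh {x : ℝ} (h : |x| < 1) : |artanh x| = artanh |x| := by
  rcases le_or_gt 0 x with hx | hx
  · rw [abs_of_nonneg hx, abs_of_nonneg (artanh_nonneg hx (by rwa [abs_of_nonneg hx] at h))]
  · rw [abs_of_neg hx] at h ⊢
    have h0 : 0 ≤ artanh (-x) := artanh_nonneg (by linarith) h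
    rw [artanh_neg] at h0 ⊢
    rw [abs_of_nonpos (by linarith)]

lemma artanh_mono {a b : ℝ} (ha : 0 ≤ a) (hab : a ≤ b) (hb : b < 1) : artanh a ≤ artanh b := by
  have h1a : 0 < 1 - a := by linarith
  have h1b : 0 < 1 - b := by linarith
  have : (1 + a) / (1 - a) ≤ (1 + b) / (1 - b) := by
    rw [div_le_div_iff₀ h1a h1b]; nlinarith
  have := Real.log_le_log (by positivity) this
  rw [artanh, artanh]; linarith

lemma abs_tanh (x : ℝ) : |Real.tanh x| = Real.tanh |x| := by
  rcases le_or_gt 0 x with hx | hx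
  · rw [abs_of_nonneg hx, abs_of_nonneg]
    rw [Real.tanh_eq_sinh_div_cosh]
    exact div_nonneg (Real.sinh_nonneg_iff.mpr hx) (Real.cosh_pos x).le
  · rw [abs_of_neg hx, Real.tanh_neg]
    have h0 : 0 ≤ -Real.tanh x := by
      rw [← Real.tanh_neg, Real.tanh_eq_sinh_div_cosh]
      exact div_nonneg (Real.sinh_nonneg_iff.mpr (by linarith)) (Real.cosh_pos _).le
    rw [abs_of_nonpos (by linarith)]

/-- The magnitude of the sum-product check-node message
`2 * artanh (∏ tanh (ℓ i / 2))` is upper-bounded by the minimum of the magnitudes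
of the incoming messages, i.e., by the magnitude of the min-sum check-node
message: the min-sum update over-estimates the reliability of the sum-product
update. -/
theorem sp_checknode_abs_le_minsum {ι : Type*} (S : Finset ι) (hS : S.Nonempty)
    (ℓ : ι → ℝ) :
    |2 * artanh (∏ i ∈ S, Real.tanh (ℓ i / 2))| ≤ S.inf' hS (fun i => |ℓ i|) := by
  classical
  apply Finset.le_inf'
  intro i hi
  set P := ∏ j ∈ S, Real.tanh (ℓ j / 2) with hP
  have habsP : |P| ≤ Real.tanh (|ℓ i| / 2) := by
    have : |P| = ∏ j ∈ S, |Real.tanh (ℓ j / 2)| := by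
      rw [hP, Finset.abs_prod]
    rw [this, ← Finset.prod_erase_mul _ _ hi]
    have h1 : ∏ j ∈ S.erase i, |Real.tanh (ℓ j / 2)| ≤ 1 := by
      apply Finset.prod_le_one
      · intro j _; positivity
      · intro j _; exact abs_le_one_iff_mul_self_le_one.mpr (by
          nlinarith [tanh_lt_one (ℓ j / 2), neg_one_lt_tanh (ℓ j / 2)])
    calc (∏ j ∈ S.erase i, |Real.tanh (ℓ j / 2)|) * |Real.tanh (ℓ i / 2)|
        ≤ 1 * |Real.tanh (ℓ i / 2)| := by
          apply mul_le_mul_of_nonneg_right h1 (abs_nonneg _)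
      _ = Real.tanh (|ℓ i| / 2) := by rw [one_mul, abs_tanh, abs_div, abs_two]
  have hPlt : |P| < 1 := lt_of_le_of_lt habsP (tanh_lt_one _)
  rw [abs_mul, abs_two]
  have : |artanh P| ≤ |ℓ i| / 2 := by
    rw [abs_artanh hPlt]
    calc artanh |P| ≤ artanh (Real.tanh (|ℓ i| / 2)) :=
          artanh_mono (abs_nonneg _) habsP (tanh_lt_one _)
      _ = |ℓ i| / 2 := artanh_tanh _
  linarith
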